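/- Let G be a linearly ordered group and T = {yxⁱ : i ∈ I} a finite geometric progression with commuting x, y and x > 1. Let x_k ∈ G with x_k·T = T·x_k (as sets). Then x_k commutes with every element of T. -/

import Mathlib

open Pointwise

theorem fixaux {α : Type*} [LinearOrder α] (f : α → α) (hf : StrictMono f)
    (S : Finset α) (hS : S.image f = S) : ∀ a ∈ S, f a = a := by
  induction S using Finset.strongInduction with
  | _ S ih =>
    rcases S.eq_empty_or_nonempty with rfl | hne
    · simp
    · set m := S.min' hne with hm
      have hmS : m ∈ S := S.min'_mem hne
      have h1 : f m ∈ S := by rw [← hS]; exact Finset.mem_image_of_mem f hmS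
      have h2 : m ≤ f m := S.min'_le _ h1
      have h3 : f m ≤ m := by
        have : m ∈ S.image f := by rw [hS]; exact hmS
        obtain ⟨a, ha, hfa⟩ := Finset.mem_image.mp this
        calc f m ≤ f a := hf.monotone (S.min'_le _ ha)
        _ = m := hfa
      have hfm : f m = m := le_antisymm h3 h2
      have hSe : (S.erase m).image f = S.erase m := by
        rw [Finset.image_erase hf.injective, hS, hfm]
      intro a haS
      rcases eq_or_ne a m with rfl | hne'
      · exact hfm
      · exact ih (S.erase m) (Finset.erase_ssubset hmS) hSe a
          (Finset.mem_erase.mpr ⟨hne', haS⟩)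

theorem stmt10 {G : Type*} [Group G] [LinearOrder G]
    [CovariantClass G G (· * ·) (· ≤ ·)]
    [CovariantClass G G (Function.swap (· * ·)) (· ≤ ·)]
    (x y : G) (hxy : x * y = y * x) (hx : 1 < x)
    (I : Finset ℕ) (T : Finset G) (hT : T = I.image (fun i => y * x ^ i))
    (xk : G) (h : ({xk} * T : Finset G) = T * {xk}) :
    ∀ t ∈ T, xk * t = t * xk := by
  have himg : T.image (fun t => xk * t * xk⁻¹) = T := by
    have h1 : ({xk} * T : Finset G) = T.image (fun t => xk * t) := by
      rw [Finset.singleton_mul]; ext a; simp [Finset.mem_smul_finset, eq_comm]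
      constructor
      · rintro ⟨b, hb, rfl⟩; simpa
      · intro hb; exact ⟨xk⁻¹ * a, hb, by group⟩
    have h2 : (T * {xk} : Finset G) = T.image (fun t => t * xk) := by
      rw [Finset.mul_singleton]; ext a; simp [Finset.mem_smul_finset, eq_comm]
      constructor
      · rintro ⟨b, hb, rfl⟩; simpa
      · intro hb; exact ⟨a * xk⁻¹, hb, by group⟩
    have : T.image (fun t => xk * t * xk⁻¹)
        = (T.image (fun t => xk * t)).image (fun t => t * xk⁻¹) := by
      rw [Finset.image_image]; rfl
    rw [this, ← h1, h, h2, Finset.image_image]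
    simp
  have hmono : StrictMono (fun t : G => xk * t * xk⁻¹) := by
    intro a b hab
    exact mul_lt_mul_left (mul_lt_mul_right hab xk) xk⁻¹
  intro t ht
  have := fixaux _ hmono T himg t ht
  have h2 : xk * t * xk⁻¹ * xk = t * xk := by rw [this]
  simpa [mul_assoc] using h2
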